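/- Information decay along a chain of binary symmetric channels: let δ ∈ (0, 1/2), let X₀ be a {0,1}-valued random variable, and for t = 1, …, d let X_t = X_{t−1} ⊕ Z_t (addition mod 2), where Z₁, …, Z_d are i.i.d. Bernoulli(δ) random variables independent of X₀. Then the mutual information between the input and the output of the chain satisfies I(X₀; X_d) ≤ (1 − 2δ)^{2d} · log 2. -/

import Mathlib

/-- Kullback–Leibler divergence between two distributions on a finite alphabet
(natural logarithm). -/
noncomputable def klDiv {X : Type*} [Fintype X] (P Q : X → ℝ) : ℝ :=
  ∑ x, P x * Real.log (P x / Q x)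

/-- `P` is a probability distribution on the finite alphabet `X`. -/
def IsProbDist {X : Type*} [Fintype X] (P : X → ℝ) : Prop :=
  (∀ x, 0 ≤ P x) ∧ ∑ x, P x = 1

/-- Mutual information of a joint distribution `J` on `A × B`: the KL divergence
between the joint law and the product of its marginals. -/
noncomputable def mutInfo {A B : Type*} [Fintype A] [Fintype B] (J : A × B → ℝ) : ℝ :=
  klDiv J (fun p => (∑ b, J (p.1, b)) * (∑ a, J (a, p.2)))

section AuxBSC
open Real

lemma hasSum_g (x : ℝ) (h1 : |x| < 1) :
    HasSum (fun k : ℕ => x^(2*k+2) * (2 / ((2*(k:ℝ)+1)*(2*(k:ℝ)+2))))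
      ((1+x)*Real.log (1+x) + (1-x)*Real.log (1-x)) := by
  have hA := Real.hasSum_pow_div_log_of_abs_lt_one h1
  have hB := Real.hasSum_pow_div_log_of_abs_lt_one (x := -x) (by rwa [abs_neg])
  set c : ℕ → ℝ := fun n => (-(1+x)) * ((-x)^(n+1)/((n:ℝ)+1)) + (-(1-x)) * (x^(n+1)/((n:ℝ)+1)) with hc
  have hCsum : HasSum c ((-(1+x)) * (-Real.log (1-(-x))) + (-(1-x)) * (-Real.log (1-x))) :=
    (hB.mul_left _).add (hA.mul_left _)
  have hval : (-(1+x)) * (-Real.log (1-(-x))) + (-(1-x)) * (-Real.log (1-x))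
      = (1+x)*Real.log (1+x) + (1-x)*Real.log (1-x) := by rw [sub_neg_eq_add]; ring
  rw [hval] at hCsum
  have hs := hCsum.summable
  have hinje : Function.Injective (fun k : ℕ => 2*k) := fun a b hab => by simpa using hab
  have hinjo : Function.Injective (fun k : ℕ => 2*k+1) := fun a b hab => by simpa using hab
  have he : HasSum (fun k => c (2*k)) (∑' k, c (2*k)) := (hs.comp_injective hinje).hasSum
  have ho : HasSum (fun k => c (2*k+1)) (∑' k, c (2*k+1)) := (hs.comp_injective hinjo).hasSum
  have htot := he.even_add_odd ho
  have hvv : (∑' k, c (2*k)) + (∑' k, c (2*k+1)) = (1+x)*Real.log (1+x) + (1-x)*Real.log (1-x) :=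
    htot.unique hCsum
  have hfin := he.add ho
  rw [hvv] at hfin
  convert hfin using 2 with k
  have hodd : (-x)^(2*k+1) = -(x^(2*k+1)) := Odd.neg_pow ⟨k, by ring⟩ x
  have heven : (-x)^(2*k+2) = x^(2*k+2) := Even.neg_pow ⟨k+1, by ring⟩ x
  simp only [hc]
  push_cast
  rw [hodd, heven]
  have h1 : (2*(k:ℝ)+1) ≠ 0 := by positivity
  have h2 : (2*(k:ℝ)+2) ≠ 0 := by positivity
  field_simp
  ring


lemma g_le (x : ℝ) (h0 : 0 ≤ x) (h1 : x < 1) :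
    (1+x)*Real.log (1+x) + (1-x)*Real.log (1-x) ≤ 2 * Real.log 2 := by
  have hq : (1+x)*Real.log (1+x) + (1-x)*Real.log (1-x)
      = 2 * Real.log 2 - 2 * Real.binEntropy ((1-x)/2) := by
    rw [Real.binEntropy]
    have e1 : ((1-x)/2)⁻¹ = ((1-x)/2)⁻¹ := rfl
    rw [Real.log_inv, Real.log_inv, Real.log_div (by linarith) (by norm_num)]
    have : (1 - (1-x)/2) = (1+x)/2 := by ring
    rw [this, Real.log_div (by linarith) (by norm_num)]
    ring
  rw [hq]
  have := Real.binEntropy_nonneg (p := (1-x)/2) (by linarith) (by linarith)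
  linarith

lemma esum_le (n : ℕ) :
    ∑ k ∈ Finset.range n, (2 / ((2*(k:ℝ)+1)*(2*(k:ℝ)+2))) ≤ 2 * Real.log 2 := by
  have key : ∀ x : ℝ, 0 ≤ x → x < 1 →
      ∑ k ∈ Finset.range n, x^(2*k+2) * (2 / ((2*(k:ℝ)+1)*(2*(k:ℝ)+2))) ≤ 2 * Real.log 2 := by
    intro x h0 h1
    have hsum := hasSum_g x (by rw [abs_of_nonneg h0]; exact h1)
    refine le_trans (sum_le_hasSum _ (fun k _ => by positivity) hsum) (g_le x h0 h1)
  have hcont : Continuous (fun x : ℝ => ∑ k ∈ Finset.range n,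
      x^(2*k+2) * (2 / ((2*(k:ℝ)+1)*(2*(k:ℝ)+2)))) := by
    refine continuous_finset_sum _ (fun k _ => (continuous_pow _).mul continuous_const)
  have hx : Filter.Tendsto (fun m : ℕ => 1 - 1/((m:ℝ)+1)) Filter.atTop (nhds 1) := by
    have := tendsto_one_div_add_atTop_nhds_zero_nat (𝕜 := ℝ)
    have h2 := (tendsto_const_nhds (x := (1:ℝ)) (f := Filter.atTop)).sub this
    simpa using h2
  have htend := (hcont.tendsto 1).comp hx
  have hval : ∑ k ∈ Finset.range n, (1:ℝ)^(2*k+2) * (2 / ((2*(k:ℝ)+1)*(2*(k:ℝ)+2)))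
      = ∑ k ∈ Finset.range n, (2 / ((2*(k:ℝ)+1)*(2*(k:ℝ)+2))) := by
    simp
  rw [hval] at htend
  refine le_of_tendsto htend (Filter.Eventually.of_forall fun m => ?_)
  have hle : 1/((m:ℝ)+1) ≤ 1 := by
    rw [div_le_one (by positivity)]; linarith [Nat.cast_nonneg (α := ℝ) m]
  have hpos : 0 < 1/((m:ℝ)+1) := by positivity
  exact key _ (by linarith) (by linarith)


lemma e_summable : Summable (fun k : ℕ => 2 / ((2*(k:ℝ)+1)*(2*(k:ℝ)+2))) :=
  summable_of_sum_range_le (fun k => by positivity) esum_le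

lemma e_tsum_le : ∑' k : ℕ, 2 / ((2*(k:ℝ)+1)*(2*(k:ℝ)+2)) ≤ 2 * Real.log 2 :=
  Summable.tsum_le_of_sum_range_le e_summable esum_le

lemma series_ineq (x : ℝ) (h0 : 0 ≤ x) (h1 : x ≤ 1) :
    (1+x)*Real.log (1+x) + (1-x)*Real.log (1-x) ≤ 2 * x^2 * Real.log 2 := by
  rcases eq_or_lt_of_le h1 with rfl | hlt
  · norm_num [Real.log_zero]
  · have hsum := hasSum_g x (by rw [abs_of_nonneg h0]; exact hlt)
    rw [← hsum.tsum_eq]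
    have hstep : ∀ k : ℕ, x^(2*k+2) * (2 / ((2*(k:ℝ)+1)*(2*(k:ℝ)+2)))
        ≤ x^2 * (2 / ((2*(k:ℝ)+1)*(2*(k:ℝ)+2))) := by
      intro k
      have : x^(2*k+2) ≤ x^2 := pow_le_pow_of_le_one h0 h1 (by omega)
      have hpos : (0:ℝ) ≤ 2 / ((2*(k:ℝ)+1)*(2*(k:ℝ)+2)) := by positivity
      exact mul_le_mul_of_nonneg_right this hpos
    calc ∑' k : ℕ, x^(2*k+2) * (2 / ((2*(k:ℝ)+1)*(2*(k:ℝ)+2)))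
        ≤ ∑' k : ℕ, x^2 * (2 / ((2*(k:ℝ)+1)*(2*(k:ℝ)+2))) :=
          Summable.tsum_le_tsum hstep hsum.summable (e_summable.mul_left _)
      _ = x^2 * ∑' k : ℕ, 2 / ((2*(k:ℝ)+1)*(2*(k:ℝ)+2)) := tsum_mul_left
      _ ≤ x^2 * (2 * Real.log 2) := by
          exact mul_le_mul_of_nonneg_left e_tsum_le (by positivity)
      _ = 2 * x^2 * Real.log 2 := by ring


lemma chanW (δ : ℝ) : ∀ (d : ℕ) (c : ZMod 2),
    (∑ z : Fin d → ZMod 2, if (∑ t, z t) = c then ∏ t, (if z t = 1 then δ else 1-δ) else 0)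
    = (1 + (if c = 0 then 1 else -1) * (1-2*δ)^d)/2 := by
  intro d
  induction d with
  | zero =>
    intro c
    have hc : c = 0 ∨ c = 1 := by revert c; decide
    rw [Fintype.sum_unique]
    rcases hc with rfl | rfl <;> simp
  | succ d ih =>
    intro c
    have hc : c = 0 ∨ c = 1 := by revert c; decide
    have hsplit : ∀ f : (Fin (d+1) → ZMod 2) → ℝ,
        ∑ z : Fin (d+1) → ZMod 2, f z = ∑ z0 : ZMod 2, ∑ z : Fin d → ZMod 2, f (Fin.cons z0 z) := by
      intro f
      rw [← (Fin.consEquiv (fun _ : Fin (d+1) => ZMod 2)).sum_comp, Fintype.sum_prod_type]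
      rfl
    rw [hsplit]
    have hinner : ∀ z0 : ZMod 2,
        (∑ z : Fin d → ZMod 2, if (∑ t, (Fin.cons z0 z : Fin (d+1) → ZMod 2) t) = c
            then ∏ t, (if (Fin.cons z0 z : Fin (d+1) → ZMod 2) t = 1 then δ else 1-δ) else 0)
        = (if z0 = 1 then δ else 1-δ) * ((1 + (if c - z0 = 0 then 1 else -1) * (1-2*δ)^d)/2) := by
      intro z0
      rw [← ih (c - z0), Finset.mul_sum]
      refine Finset.sum_congr rfl (fun z _ => ?_)
      rw [Fin.sum_univ_succ, Fin.prod_univ_succ]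
      simp only [Fin.cons_zero, Fin.cons_succ]
      have hcond : (z0 + ∑ t : Fin d, z t = c) ↔ ((∑ t : Fin d, z t) = c - z0) :=
        ⟨fun h => by rw [← h]; ring, fun h => by rw [h]; ring⟩
      simp only [hcond]
      rw [mul_ite, mul_zero]
    rw [Finset.sum_congr rfl (fun z0 _ => hinner z0)]
    have hu : (Finset.univ : Finset (ZMod 2)) = {0, 1} := by decide
    rw [hu, Finset.sum_insert (by decide), Finset.sum_singleton]
    have h01 : (0 : ZMod 2) - 1 = 1 := by decide
    have h11 : (1 : ZMod 2) - 1 = 0 := by decide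
    rcases hc with rfl | rfl <;>
      simp only [sub_zero, h01, h11, if_true, if_false, pow_succ] <;> norm_num <;> ring


lemma term_eq (c w q : ℝ) (hc : 0 ≤ c) (hw : 0 ≤ w) (hq : c * w ≤ q) :
    c*w*Real.log ((c*w)/(c*q)) = c*w*Real.log w - c*w*Real.log q := by
  rcases eq_or_lt_of_le (mul_nonneg hc hw) with h0 | hpos
  · rw [← h0]; simp
  · have hc' : 0 < c := lt_of_le_of_ne hc (by rintro rfl; simp at hpos)
    have hw' : 0 < w := lt_of_le_of_ne hw (by rintro rfl; simp at hpos)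
    have hq' : 0 < q := lt_of_lt_of_le hpos hq
    rw [mul_div_mul_left _ _ hc'.ne', Real.log_div hw'.ne' hq'.ne']
    ring

lemma w_entropy_le (x : ℝ) (h0 : 0 ≤ x) (h1 : x ≤ 1) :
    (1+x)/2 * Real.log ((1+x)/2) + (1-x)/2 * Real.log ((1-x)/2)
      ≤ x^2 * Real.log 2 - Real.log 2 := by
  have hW0 : (1+x)/2 * Real.log ((1+x)/2) = (1+x)/2 * (Real.log (1+x) - Real.log 2) := by
    rw [Real.log_div (by linarith) (by norm_num)]
  have hW1 : (1-x)/2 * Real.log ((1-x)/2) = (1-x)/2 * (Real.log (1-x) - Real.log 2) := by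
    rcases eq_or_lt_of_le h1 with rfl | hlt
    · norm_num
    · rw [Real.log_div (by linarith) (by norm_num)]
  rw [hW0, hW1]
  have hs := series_ineq x h0 h1
  nlinarith [hs]

lemma key (x u v : ℝ) (hx0 : 0 < x) (hx1 : x ≤ 1) (hu : 0 ≤ u) (hv : 0 ≤ v)
    (huv : u + v = 1) :
    u*((1+x)/2) * Real.log ((u*((1+x)/2))/((u*((1+x)/2)+u*((1-x)/2))*(u*((1+x)/2)+v*((1-x)/2))))
    + u*((1-x)/2) * Real.log ((u*((1-x)/2))/((u*((1+x)/2)+u*((1-x)/2))*(u*((1-x)/2)+v*((1+x)/2))))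
    + (v*((1-x)/2) * Real.log ((v*((1-x)/2))/((v*((1-x)/2)+v*((1+x)/2))*(u*((1+x)/2)+v*((1-x)/2))))
    + v*((1+x)/2) * Real.log ((v*((1+x)/2))/((v*((1-x)/2)+v*((1+x)/2))*(u*((1-x)/2)+v*((1+x)/2)))))
    ≤ x^2 * Real.log 2 := by
  set W0 : ℝ := (1+x)/2 with hW0
  set W1 : ℝ := (1-x)/2 with hW1
  set A : ℝ := u*W0+v*W1 with hA
  set B : ℝ := u*W1+v*W0 with hB
  have hrow_u : u*W0 + u*W1 = u := by rw [hW0, hW1]; ring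
  have hrow_v : v*W1 + v*W0 = v := by rw [hW0, hW1]; ring
  rw [hrow_u, hrow_v]
  have hW0p : 0 ≤ W0 := by rw [hW0]; linarith
  have hW1p : 0 ≤ W1 := by rw [hW1]; linarith
  have t1 := term_eq u W0 A hu hW0p (by nlinarith)
  have t2 := term_eq u W1 B hu hW1p (by nlinarith)
  have t3 := term_eq v W1 A hv hW1p (by nlinarith)
  have t4 := term_eq v W0 B hv hW0p (by nlinarith)
  rw [t1, t2, t3, t4]
  have hABsum : A + B = 1 := by rw [hA, hB, hW0, hW1]; nlinarith
  have hent : -(A * Real.log A + B * Real.log B) ≤ Real.log 2 := by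
    have hB' : B = 1 - A := by linarith
    have := Real.binEntropy_le_log_two (p := A)
    rw [Real.binEntropy, Real.log_inv, Real.log_inv, ← hB'] at this
    linarith
  have hW := w_entropy_le x hx0.le hx1
  have hexp : u*W0*Real.log W0 - u*W0*Real.log A + (u*W1*Real.log W1 - u*W1*Real.log B)
      + ((v*W1*Real.log W1 - v*W1*Real.log A) + (v*W0*Real.log W0 - v*W0*Real.log B))
      = (u+v) * (W0 * Real.log W0 + W1 * Real.log W1)
        - (A * Real.log A + B * Real.log B) := by
    rw [hA, hB]; ring
  rw [hexp, huv, one_mul]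
  rw [← hW0, ← hW1] at hW
  linarith

end AuxBSC

/-- Information decay along a chain of binary symmetric channels: if `X₀` is a
`{0,1}`-valued random variable with law `p`, and `X_t = X_{t-1} ⊕ Z_t` for
i.i.d. `Bernoulli(δ)` noise variables `Z₁, …, Z_d` independent of `X₀` (so that the
joint law of `(X₀, X_d)` is `(a, b) ↦ p a * ∑_{z} 𝟙[a + ∑ₜ z t = b] ∏ₜ Bern(δ)(z t)`,
working in `ZMod 2` where `⊕` is addition), then `I(X₀; X_d) ≤ (1 - 2δ)^{2d} log 2`. -/
theorem bsc_chain_info_decay (δ : ℝ) (hδ₀ : 0 < δ) (hδ₁ : δ < 1/2) (d : ℕ)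
    (p : ZMod 2 → ℝ) (hp : IsProbDist p) :
    mutInfo (fun q : ZMod 2 × ZMod 2 =>
      p q.1 * ∑ z : Fin d → ZMod 2,
        (if q.1 + ∑ t, z t = q.2 then ∏ t, (if z t = 1 then δ else 1 - δ) else 0)) ≤
    (1 - 2*δ)^(2*d) * Real.log 2 := by
  obtain ⟨hp0, hp1⟩ := hp
  have hJ : ∀ a b : ZMod 2,
      (∑ z : Fin d → ZMod 2, if a + ∑ t, z t = b then ∏ t, (if z t = 1 then δ else 1-δ) else 0)
      = (1 + (if b - a = 0 then 1 else -1) * (1-2*δ)^d)/2 := by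
    intro a b
    rw [← chanW δ d (b - a)]
    refine Finset.sum_congr rfl (fun z _ => ?_)
    have hiff : (a + ∑ t, z t = b) ↔ ((∑ t, z t) = b - a) :=
      ⟨fun h => by rw [← h]; ring, fun h => by rw [h]; ring⟩
    simp only [hiff]
  unfold mutInfo klDiv
  simp only [hJ]
  rw [Fintype.sum_prod_type]
  have hu2 : (Finset.univ : Finset (ZMod 2)) = {0, 1} := by decide
  simp only [hu2, Finset.sum_insert (by decide : (0:ZMod 2) ∉ ({1} : Finset (ZMod 2))),
    Finset.sum_singleton]
  have c1 : (if (0:ZMod 2) - 0 = 0 then (1:ℝ) else -1) = 1 := if_pos (by decide)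
  have c2 : (if (1:ZMod 2) - 0 = 0 then (1:ℝ) else -1) = -1 := if_neg (by decide)
  have c3 : (if (0:ZMod 2) - 1 = 0 then (1:ℝ) else -1) = -1 := if_neg (by decide)
  have c4 : (if (1:ZMod 2) - 1 = 0 then (1:ℝ) else -1) = 1 := if_pos (by decide)
  have hone : ∀ y : ℝ, (1 + 1 * y) = 1 + y := fun y => by ring
  have hneg : ∀ y : ℝ, (1 + -1 * y) = 1 - y := fun y => by ring
  simp only [c1, c2, c3, c4, hone, hneg]
  have hx0 : 0 < (1-2*δ)^d := pow_pos (by linarith) d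
  have hx1 : (1-2*δ)^d ≤ 1 := pow_le_one₀ (by linarith) (by linarith)
  have hu : 0 ≤ p 0 := hp0 0
  have hv : 0 ≤ p 1 := hp0 1
  have huv : p 0 + p 1 = 1 := by
    rw [← hp1, hu2, Finset.sum_insert (by decide), Finset.sum_singleton]
  have hk := key ((1-2*δ)^d) (p 0) (p 1) hx0 hx1 hu hv huv
  rw [mul_comm 2 d, pow_mul]
  exact le_trans (le_of_eq (by ring_nf)) (le_trans hk (le_of_eq (by ring_nf)))
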